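/- Let $X_1,\dots,X_n$ be i.i.d. uniform on $[0,s]$ with order statistics $X_{(1)} \le \dots \le X_{(n)}$, and let $0 < d < s$, $n_{\min} = \lfloor s/d \rfloor$. The probability that the geometric graph on $\{X_i\}$ with connection radius $d$ is connected (i.e., all interior gaps $X_{(i)} - X_{(i-1)} \le d$ for $2 \le i \le n$) equals $\pcon = \sum_{i=0}^{n_{\min}} (-1)^i \binom{n-1}{i} \left(1 - \frac{id}{s}\right)^n$. -/

import Mathlib

open MeasureTheory Finset Nat

noncomputable def unif (s : ℝ) : Measure ℝ :=
  (ENNReal.ofReal s⁻¹) • (volume.restrict (Set.Icc 0 s))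

noncomputable def iidUnif (n : ℕ) (s : ℝ) : Measure (Fin n → ℝ) :=
  Measure.pi fun _ => unif s

noncomputable def orderStat {n : ℕ} (x : Fin n → ℝ) : Fin n → ℝ :=
  x ∘ Tuple.sort x

noncomputable def slack (n : ℕ) (s : ℝ) (x : Fin n → ℝ) (i : Fin (n + 1)) : ℝ :=
  (if h : (i : ℕ) < n then orderStat x ⟨i, h⟩ else s) -
  (if h : 0 < (i : ℕ) then orderStat x ⟨(i : ℕ) - 1, by have := i.isLt; omega⟩ else 0)

namespace ProbConn

variable {n : ℕ}

/-- The (half-open style) strict simplex. -/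
def sx (n : ℕ) (t : ℝ) : Set (Fin n → ℝ) :=
  {x | StrictMono x ∧ ∀ i, x i ∈ Set.Icc 0 t}

/-- Bad gap set : the `j`-th consecutive gap exceeds `d`. -/
def gapB (n : ℕ) (d : ℝ) (j : ℕ) : Set (Fin n → ℝ) :=
  {x | ∃ h : j + 1 < n, d < x ⟨j + 1, h⟩ - x ⟨j, Nat.lt_of_succ_lt h⟩}

lemma measurableSet_strictMono :
    MeasurableSet {x : Fin n → ℝ | StrictMono x} := by
  have : {x : Fin n → ℝ | StrictMono x} =
      ⋂ (i) (j) (_ : i < j), {x : Fin n → ℝ | x i < x j} := by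
    ext x
    simp only [Set.mem_iInter, Set.mem_setOf_eq]
    exact ⟨fun h i j hij => h hij, fun h a b hab => h a b hab⟩
  rw [this]
  exact MeasurableSet.iInter fun i => MeasurableSet.iInter fun j =>
    MeasurableSet.iInter fun _ =>
      measurableSet_lt (measurable_pi_apply i) (measurable_pi_apply j)

lemma measurableSet_sx (t : ℝ) : MeasurableSet (sx n t) := by
  have : sx n t = {x : Fin n → ℝ | StrictMono x} ∩
      ⋂ i, {x : Fin n → ℝ | x i ∈ Set.Icc 0 t} := by
    ext x; simp [sx, Set.mem_iInter]
  rw [this]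
  exact measurableSet_strictMono.inter <| MeasurableSet.iInter fun i =>
    (measurable_pi_apply i) measurableSet_Icc

lemma measurableSet_gapB (d : ℝ) (j : ℕ) : MeasurableSet (gapB n d j) := by
  by_cases h : j + 1 < n
  · have : gapB n d j = {x : Fin n → ℝ |
        d < x ⟨j + 1, h⟩ - x ⟨j, Nat.lt_of_succ_lt h⟩} := by
      ext x; simp [gapB, h]
    rw [this]
    exact measurableSet_lt measurable_const
      ((measurable_pi_apply (⟨j + 1, h⟩ : Fin n)).sub (measurable_pi_apply (⟨j, Nat.lt_of_succ_lt h⟩ : Fin n)))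
  · have : gapB n d j = ∅ := by
      ext x; simp [gapB, h]
    rw [this]; exact MeasurableSet.empty

/-- The set of tuples with a repeated value is null. -/
lemma volume_nonInjective_eq_zero :
    volume {x : Fin n → ℝ | ¬ Function.Injective x} = 0 := by
  have hsub : {x : Fin n → ℝ | ¬ Function.Injective x} ⊆
      ⋃ (i) (j) (_ : i ≠ j), {x : Fin n → ℝ | x i = x j} := by
    intro x hx
    simp only [Function.Injective, not_forall] at hx
    obtain ⟨i, j, hij, hne⟩ := hx
    exact Set.mem_iUnion.2 ⟨i, Set.mem_iUnion.2 ⟨j, Set.mem_iUnion.2 ⟨hne, hij⟩⟩⟩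
  refine measure_mono_null hsub ?_
  refine measure_iUnion_null fun i => measure_iUnion_null fun j => measure_iUnion_null fun h => ?_
  have hsub2 : {x : Fin n → ℝ | x i = x j} ⊆
      (LinearMap.ker ((LinearMap.proj i : (Fin n → ℝ) →ₗ[ℝ] ℝ) - LinearMap.proj j) :
        Set (Fin n → ℝ)) := by
    intro x hx
    simp only [SetLike.mem_coe, LinearMap.mem_ker, LinearMap.sub_apply, LinearMap.proj_apply]
    simpa [sub_eq_zero] using hx
  refine measure_mono_null hsub2 (Measure.addHaar_submodule _ _ ?_)
  intro htop
  have : Pi.single i (1:ℝ) ∈ LinearMap.ker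
      ((LinearMap.proj i : (Fin n → ℝ) →ₗ[ℝ] ℝ) - LinearMap.proj j) := by
    rw [htop]; trivial
  simp [Pi.single_apply, h, h.symm] at this

/-- Symmetrization: the measure of the event expressed via order statistics is `n!`
times the measure of the corresponding strictly ordered set. -/
lemma volume_orderStat_event (C : (Fin n → ℝ) → Prop)
    (hC : MeasurableSet {x : Fin n → ℝ | StrictMono x ∧ C x}) :
    volume {x : Fin n → ℝ | C (orderStat x)} =
      (n ! : ENNReal) * volume {x : Fin n → ℝ | StrictMono x ∧ C x} := by
  set S := {x : Fin n → ℝ | StrictMono x ∧ C x} with hS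
  set A : Equiv.Perm (Fin n) → Set (Fin n → ℝ) :=
    fun σ => {x | StrictMono (x ∘ σ) ∧ C (x ∘ σ)} with hA
  have hpre : ∀ σ : Equiv.Perm (Fin n),
      A σ = (MeasurableEquiv.piCongrLeft (fun _ : Fin n => ℝ) σ.symm) ⁻¹' S := by
    intro σ
    have hcoe : ∀ x : Fin n → ℝ,
        (MeasurableEquiv.piCongrLeft (fun _ : Fin n => ℝ) σ.symm) x = x ∘ σ := by
      intro x; funext b
      simp [MeasurableEquiv.piCongrLeft, Equiv.piCongrLeft_apply]
    ext x
    simp [hA, hS, Set.mem_preimage, hcoe]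
  have hApre : ∀ σ : Equiv.Perm (Fin n), MeasurableSet (A σ) := by
    intro σ; rw [hpre]
    exact (MeasurableEquiv.piCongrLeft (fun _ : Fin n => ℝ) σ.symm).measurable hC
  have hos : ∀ (σ : Equiv.Perm (Fin n)) (x : Fin n → ℝ), x ∈ A σ → orderStat x = x ∘ σ := by
    intro σ x hx
    exact (Tuple.comp_sort_eq_comp_iff_monotone.2 hx.1.monotone).symm
  have hinj : ∀ (σ : Equiv.Perm (Fin n)) (x : Fin n → ℝ), x ∈ A σ → Function.Injective x := by
    intro σ x hx i j hij
    have : (x ∘ σ) (σ.symm i) = (x ∘ σ) (σ.symm j) := by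
      simp [Function.comp, hij]
    have := hx.1.injective this
    simpa using congrArg σ this
  have hdisj : Pairwise (Function.onFun Disjoint A) := by
    intro σ τ hne
    rw [Function.onFun_apply, Set.disjoint_left]
    intro x hxσ hxτ
    have h1 : x ∘ σ = x ∘ τ := by rw [← hos σ x hxσ, ← hos τ x hxτ]
    exact hne (Equiv.ext fun i => (hinj σ x hxσ) (congrFun h1 i))
  have hsub1 : (⋃ σ, A σ) ⊆ {x : Fin n → ℝ | C (orderStat x)} := by
    intro x hx
    obtain ⟨σ, hσ⟩ := Set.mem_iUnion.1 hx
    show C (orderStat x)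
    rw [hos σ x hσ]
    exact hσ.2
  have hsub2 : {x : Fin n → ℝ | C (orderStat x)} ⊆
      (⋃ σ, A σ) ∪ {x : Fin n → ℝ | ¬ Function.Injective x} := by
    intro x hx
    by_cases hxi : Function.Injective x
    · left
      refine Set.mem_iUnion.2 ⟨Tuple.sort x, ?_, hx⟩
      exact (Tuple.monotone_sort x).strictMono_of_injective
        (hxi.comp (Tuple.sort x).injective)
    · right; exact hxi
  have hEvol : volume {x : Fin n → ℝ | C (orderStat x)} = volume (⋃ σ, A σ) := by
    refine le_antisymm ?_ (measure_mono hsub1)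
    calc volume {x : Fin n → ℝ | C (orderStat x)}
        ≤ volume ((⋃ σ, A σ) ∪ {x : Fin n → ℝ | ¬ Function.Injective x}) :=
          measure_mono hsub2
      _ ≤ volume (⋃ σ, A σ) + volume {x : Fin n → ℝ | ¬ Function.Injective x} :=
          measure_union_le _ _
      _ = volume (⋃ σ, A σ) := by rw [volume_nonInjective_eq_zero, add_zero]
  rw [hEvol, measure_iUnion hdisj hApre, tsum_fintype]
  have hAvol : ∀ σ : Equiv.Perm (Fin n), volume (A σ) = volume S := by
    intro σ
    rw [hpre]
    exact (MeasureTheory.volume_measurePreserving_piCongrLeft (fun _ : Fin n => ℝ)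
      σ.symm).measure_preimage hC.nullMeasurableSet
  simp only [hAvol, Finset.sum_const, Finset.card_univ, Fintype.card_perm, Fintype.card_fin,
    nsmul_eq_mul]

lemma strictMono_succ_iff (f : Fin n → ℝ) :
    StrictMono f ↔ ∀ (j : ℕ) (hj : j + 1 < n),
      f ⟨j, Nat.lt_of_succ_lt hj⟩ < f ⟨j + 1, hj⟩ := by
  constructor
  · intro h j hj
    exact h (show (⟨j, Nat.lt_of_succ_lt hj⟩ : Fin n) < ⟨j + 1, hj⟩ by
      simp [Fin.lt_def])
  · intro h
    match n with
    | 0 => exact fun a => absurd a.isLt (by omega)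
    | Nat.succ m =>
      refine Fin.strictMono_iff_lt_succ.2 fun i => ?_
      exact h (i : ℕ) (Nat.succ_lt_succ i.isLt)

/-- Volume of the strict simplex. -/
lemma volume_sx (hn : 0 < n) {t : ℝ} (ht : 0 ≤ t) :
    volume (sx n t) = ENNReal.ofReal (t ^ n / n !) := by
  have h1 : volume {x : Fin n → ℝ | ∀ i, orderStat x i ∈ Set.Icc 0 t}
      = (n ! : ENNReal) * volume (sx n t) :=
    volume_orderStat_event (fun x => ∀ i, x i ∈ Set.Icc 0 t) (measurableSet_sx t)
  have h2 : {x : Fin n → ℝ | ∀ i, orderStat x i ∈ Set.Icc 0 t}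
      = Set.pi Set.univ (fun _ : Fin n => Set.Icc 0 t) := by
    ext x
    simp only [Set.mem_setOf_eq, Set.mem_pi, Set.mem_univ, forall_true_left]
    constructor
    · intro h i
      have := h ((Tuple.sort x).symm i)
      simpa [orderStat] using this
    · intro h i
      exact h _
  have h3 : volume (Set.pi Set.univ (fun _ : Fin n => Set.Icc 0 t))
      = (ENNReal.ofReal t) ^ n := by
    rw [volume_pi_pi]
    simp [Real.volume_Icc]
  rw [h2, h3] at h1
  have hfac0 : ((n ! : ℝ)) ≠ 0 := Nat.cast_ne_zero.2 (Nat.factorial_ne_zero n)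
  have key : (n ! : ENNReal) * ENNReal.ofReal (t ^ n / n !)
      = (n ! : ENNReal) * volume (sx n t) := by
    rw [← h1, ← ENNReal.ofReal_natCast, ← ENNReal.ofReal_mul (by positivity),
      ← ENNReal.ofReal_pow ht]
    congr 1
    field_simp
  exact ((ENNReal.mul_right_inj (by exact_mod_cast Nat.factorial_ne_zero n)
    (ENNReal.natCast_ne_top _)).1 key).symm

/-- Translation identity for the simplex intersected with bad-gap sets. -/
lemma volume_sx_inter_gap (hn : 0 < n) {s d : ℝ} (hd : 0 < d)
    (I : Finset ℕ) (hI : I ⊆ Finset.range (n - 1)) :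
    volume (sx n s ∩ ⋂ j ∈ I, gapB n d j) = volume (sx n (s - I.card * d)) := by
  classical
  set c : Fin n → ℝ := fun k => (I.filter (fun m => m < (k : ℕ))).card * d with hc
  have hcnn : ∀ k, 0 ≤ c k := fun k => by positivity
  have hcle : ∀ k, c k ≤ I.card * d := by
    intro k
    have : (I.filter (fun m => m < (k : ℕ))).card ≤ I.card :=
      Finset.card_le_card (Finset.filter_subset _ _)
    have h2 := (Nat.cast_le (α := ℝ)).2 this
    exact mul_le_mul_of_nonneg_right h2 hd.le
  have hc0 : c ⟨0, hn⟩ = 0 := by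
    have : I.filter (fun m => m < 0) = ∅ := by
      apply Finset.filter_false_of_mem; intro m _; omega
    simp [hc, this]
  have hclast : c ⟨n - 1, by omega⟩ = I.card * d := by
    have : I.filter (fun m => m < n - 1) = I := by
      apply Finset.filter_true_of_mem
      intro m hm
      exact Finset.mem_range.1 (hI hm)
    simp [hc, this]
  have hcsucc : ∀ (j : ℕ) (hj : j + 1 < n),
      c ⟨j + 1, hj⟩ - c ⟨j, Nat.lt_of_succ_lt hj⟩ = if j ∈ I then d else 0 := by
    intro j hj
    have hsplit : I.filter (fun m => m < j + 1)
        = I.filter (fun m => m < j) ∪ I.filter (fun m => m = j) := by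
      ext m
      simp only [Finset.mem_filter, Finset.mem_union]
      constructor
      · rintro ⟨h1, h2⟩
        rcases Nat.lt_succ_iff_lt_or_eq.1 h2 with h | h
        exacts [Or.inl ⟨h1, h⟩, Or.inr ⟨h1, h⟩]
      · rintro (⟨h1, h2⟩ | ⟨h1, rfl⟩)
        exacts [⟨h1, by omega⟩, ⟨h1, by omega⟩]
    have hdisj : Disjoint (I.filter (fun m => m < j)) (I.filter (fun m => m = j)) := by
      rw [Finset.disjoint_left]
      intro m hm1 hm2
      have := (Finset.mem_filter.1 hm1).2
      have := (Finset.mem_filter.1 hm2).2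
      omega
    have hcard2 : (I.filter (fun m => m = j)).card = if j ∈ I then 1 else 0 := by
      by_cases hj' : j ∈ I
      · rw [if_pos hj']
        have : I.filter (fun m => m = j) = {j} := by
          ext m
          simp only [Finset.mem_filter, Finset.mem_singleton]
          constructor
          · rintro ⟨_, rfl⟩; rfl
          · rintro rfl; exact ⟨hj', rfl⟩
        simp [this]
      · rw [if_neg hj']
        have : I.filter (fun m => m = j) = ∅ := by
          apply Finset.filter_false_of_mem
          intro m hm h
          exact hj' (h ▸ hm)
        simp [this]
    have : (I.filter (fun m => m < j + 1)).card
        = (I.filter (fun m => m < j)).card + (if j ∈ I then 1 else 0) := by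
      rw [hsplit, Finset.card_union_of_disjoint hdisj, hcard2]
    simp only [hc, this]
    split <;> push_cast <;> ring
  have hkey : sx n s ∩ ⋂ j ∈ I, gapB n d j
      = (fun x => x - c) ⁻¹' sx n (s - I.card * d) := by
    ext x
    simp only [Set.mem_inter_iff, Set.mem_iInter, Set.mem_preimage]
    constructor
    · rintro ⟨⟨hsm, hbox⟩, hgap⟩
      have hy_sm : StrictMono (x - c) := by
        refine (strictMono_succ_iff _).2 fun j hj => ?_
        simp only [Pi.sub_apply]
        by_cases hjI : j ∈ I
        · obtain ⟨h', hlt⟩ := hgap j hjI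
          have := hcsucc j hj
          rw [if_pos hjI] at this
          linarith
        · have h1 := (strictMono_succ_iff x).1 hsm j hj
          have := hcsucc j hj
          rw [if_neg hjI] at this
          linarith
      refine ⟨hy_sm, fun i => ?_⟩
      constructor
      · have h1 : (x - c) ⟨0, hn⟩ ≤ (x - c) i :=
          hy_sm.monotone (by simp [Fin.le_def])
        have h2 := (hbox ⟨0, hn⟩).1
        simp only [Pi.sub_apply] at h1 ⊢
        rw [hc0] at h1
        linarith
      · have h1 : (x - c) i ≤ (x - c) ⟨n - 1, by omega⟩ :=
          hy_sm.monotone (by simp only [Fin.le_def]; omega)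
        have h2 := (hbox ⟨n - 1, by omega⟩).2
        simp only [Pi.sub_apply] at h1 ⊢
        rw [hclast] at h1
        linarith
    · rintro ⟨hsm, hbox⟩
      have hx_sm : StrictMono x := by
        refine (strictMono_succ_iff _).2 fun j hj => ?_
        have h1 := (strictMono_succ_iff _).1 hsm j hj
        have h2 := hcsucc j hj
        simp only [Pi.sub_apply] at h1
        split at h2 <;> nlinarith
      refine ⟨⟨hx_sm, fun i => ?_⟩, fun j hjI => ?_⟩
      · have h1 := (hbox i).1
        have h2 := (hbox i).2
        simp only [Pi.sub_apply] at h1 h2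
        have h3 := hcnn i
        have h4 := hcle i
        constructor <;> linarith
      · have hjlt : j + 1 < n := by
          have := Finset.mem_range.1 (hI hjI)
          omega
        refine ⟨hjlt, ?_⟩
        have h1 := (strictMono_succ_iff _).1 hsm j hjlt
        have h2 := hcsucc j hjlt
        rw [if_pos hjI] at h2
        simp only [Pi.sub_apply] at h1
        linarith
  rw [hkey]
  have : (fun x : Fin n → ℝ => x - c) = (fun x => x + (-c)) := by
    funext x; simp [sub_eq_add_neg]
  rw [this]
  exact measure_preimage_add_right volume (-c) _

/-- Inclusion–exclusion for measures, real-valued form. -/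
lemma ie_aux {α : Type*} [MeasurableSpace α] (μ : Measure α) {ι : Type*} [DecidableEq ι]
    (B : ι → Set α) (hB : ∀ i, MeasurableSet (B i)) (F : Finset ι) :
    ∀ (T : Set α), MeasurableSet T → μ T ≠ ⊤ →
      (μ (T \ ⋃ i ∈ F, B i)).toReal =
        ∑ I ∈ F.powerset, (-1 : ℝ) ^ I.card * (μ (T ∩ ⋂ i ∈ I, B i)).toReal := by
  induction F using Finset.induction_on with
  | empty => intro T hT hTfin; simp
  | insert a F ha IH =>
    intro T hT hTfin
    have hTa : MeasurableSet (T \ B a) := hT.diff (hB a)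
    have hTafin : μ (T \ B a) ≠ ⊤ :=
      fun h => hTfin (top_le_iff.1 (h ▸ measure_mono Set.diff_subset))
    have hset : T \ ⋃ i ∈ insert a F, B i = (T \ B a) \ ⋃ i ∈ F, B i := by
      simp only [Finset.set_biUnion_insert]
      rw [Set.diff_diff]
    rw [hset, IH _ hTa hTafin, Finset.sum_powerset_insert ha]
    have hterm : ∀ I ∈ F.powerset,
        (μ ((T \ B a) ∩ ⋂ i ∈ I, B i)).toReal =
          (μ (T ∩ ⋂ i ∈ I, B i)).toReal - (μ (T ∩ ⋂ i ∈ insert a I, B i)).toReal := by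
      intro I hI
      have hXm : MeasurableSet (T ∩ ⋂ i ∈ I, B i) :=
        hT.inter (MeasurableSet.biInter (I : Set ι).to_countable fun i _ => hB i)
      have hXfin : μ (T ∩ ⋂ i ∈ I, B i) ≠ ⊤ :=
        fun h => hTfin (top_le_iff.1 (h ▸ measure_mono Set.inter_subset_left))
      have h1 : (T \ B a) ∩ ⋂ i ∈ I, B i =
          (T ∩ ⋂ i ∈ I, B i) \ ((T ∩ ⋂ i ∈ I, B i) ∩ B a) := by
        ext x
        simp only [Set.mem_diff, Set.mem_inter_iff]
        tauto
      have h2 : T ∩ ⋂ i ∈ insert a I, B i = (T ∩ ⋂ i ∈ I, B i) ∩ B a := by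
        simp only [Finset.set_biInter_insert]
        ext x; simp only [Set.mem_inter_iff]; tauto
      rw [h1, h2, measure_diff Set.inter_subset_left
        (hXm.inter (hB a)).nullMeasurableSet
        (fun h => hXfin (top_le_iff.1 (h ▸ measure_mono Set.inter_subset_left))),
        ENNReal.toReal_sub_of_le (measure_mono Set.inter_subset_left) hXfin]
    have hcard : ∀ I ∈ F.powerset, ((insert a I).card : ℕ) = I.card + 1 := by
      intro I hI
      exact Finset.card_insert_of_notMem fun h => ha (Finset.mem_powerset.1 hI h)
    rw [show (∑ I ∈ F.powerset, (-1 : ℝ) ^ I.card * (μ (T \ B a ∩ ⋂ i ∈ I, B i)).toReal)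
        = ∑ I ∈ F.powerset, ((-1 : ℝ) ^ I.card * (μ (T ∩ ⋂ i ∈ I, B i)).toReal
          + (-1 : ℝ) ^ (insert a I).card * (μ (T ∩ ⋂ i ∈ insert a I, B i)).toReal) from
      Finset.sum_congr rfl fun I hI => by rw [hterm I hI, hcard I hI]; ring]
    rw [Finset.sum_add_distrib]

lemma sx_empty (hn : 0 < n) {t : ℝ} (ht : t < 0) : sx n t = ∅ := by
  ext x
  simp only [sx, Set.mem_setOf_eq, Set.mem_empty_iff_false, iff_false, not_and]
  intro _ h
  have h1 := (h ⟨0, hn⟩).1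
  have h2 := (h ⟨0, hn⟩).2
  linarith

lemma forall_orderStat_iff (x : Fin n → ℝ) (p : ℝ → Prop) :
    (∀ i, p (orderStat x i)) ↔ ∀ i, p (x i) := by
  constructor
  · intro h i
    have := h ((Tuple.sort x).symm i)
    simpa [orderStat] using this
  · intro h i
    exact h _

lemma iidUnif_eq (n : ℕ) (s : ℝ) :
    iidUnif n s = (ENNReal.ofReal s⁻¹) ^ n •
      volume.restrict (Set.pi Set.univ fun _ : Fin n => Set.Icc 0 s) := by
  have hfin : IsFiniteMeasure (unif s) := by
    constructor
    rw [unif, Measure.smul_apply, Measure.restrict_apply_univ, smul_eq_mul]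
    exact ENNReal.mul_lt_top ENNReal.ofReal_lt_top
      (by rw [Real.volume_Icc]; exact ENNReal.ofReal_lt_top)
  refine Measure.pi_eq fun t ht => ?_
  rw [Measure.smul_apply,
    Measure.restrict_apply' (MeasurableSet.univ_pi fun _ => measurableSet_Icc),
    ← Set.pi_inter_distrib, volume_pi_pi, smul_eq_mul]
  have hu : ∀ i : Fin n, unif s (t i)
      = ENNReal.ofReal s⁻¹ * volume (t i ∩ Set.Icc 0 s) := by
    intro i
    rw [unif, Measure.smul_apply, Measure.restrict_apply (ht i), smul_eq_mul]
  rw [Finset.prod_congr rfl fun i _ => hu i, Finset.prod_mul_distrib,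
    Finset.prod_const, Finset.card_univ, Fintype.card_fin]

lemma hslack_eq {s : ℝ} (x : Fin n → ℝ) (i : Fin (n + 1)) (h1 : 0 < (i : ℕ))
    (h2 : (i : ℕ) < n) :
    slack n s x i = orderStat x ⟨i, h2⟩ -
      orderStat x ⟨(i : ℕ) - 1, by omega⟩ := by
  simp only [slack, h1, h2, dite_true]

end ProbConn

open ProbConn in
/-- Probability of connectivity of the geometric graph: all interior spacings
are at most d. -/
theorem prob_connectivity (n : ℕ) (s d : ℝ) (hs : 0 < s) (hd : 0 < d) (hds : d < s) :
    iidUnif n s {ω | ∀ i : Fin (n + 1), 0 < (i : ℕ) → (i : ℕ) < n →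
        slack n s ω i ≤ d} =
      ENNReal.ofReal (∑ i ∈ Finset.range (⌊s / d⌋₊ + 1),
        (-1 : ℝ) ^ i * (n - 1).choose i * (1 - i * d / s) ^ n) := by
  classical
  rcases Nat.eq_zero_or_pos n with rfl | hn
  · -- degenerate case n = 0
    have hset : {ω : Fin 0 → ℝ | ∀ i : Fin (0 + 1), 0 < (i : ℕ) → (i : ℕ) < 0 →
        slack 0 s ω i ≤ d} = Set.univ :=
      Set.eq_univ_iff_forall.2 fun ω i h1 h2 => absurd h2 (by omega)
    rw [hset]
    have h1 : iidUnif 0 s Set.univ = 1 := by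
      rw [iidUnif_eq 0 s]
      have hpi : (Set.pi Set.univ fun _ : Fin 0 => Set.Icc 0 s) = Set.univ := by
        ext x; simp [Set.mem_pi]
      rw [Measure.smul_apply, Measure.restrict_apply_univ, hpi, pow_zero, one_smul]
      have : (volume : Measure (Fin 0 → ℝ)) Set.univ = 1 := by
        rw [MeasureTheory.volume_pi, Measure.pi_univ]
        simp
      exact this
    have h2 : (∑ i ∈ Finset.range (⌊s / d⌋₊ + 1),
        (-1 : ℝ) ^ i * ((0 - 1 : ℕ).choose i : ℝ) * (1 - i * d / s) ^ 0) = 1 := by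
      rw [Finset.sum_eq_single 0]
      · simp
      · intro i _ hi
        have : (0 : ℕ).choose i = 0 := Nat.choose_eq_zero_of_lt (by omega)
        simp [this]
      · intro h
        exact absurd (Finset.mem_range.2 (by omega)) h
    rw [h1, h2, ENNReal.ofReal_one]
  -- main case
  set box : Set (Fin n → ℝ) := Set.pi Set.univ (fun _ : Fin n => Set.Icc 0 s) with hbox
  set C : (Fin n → ℝ) → Prop := fun y => (∀ i, y i ∈ Set.Icc 0 s) ∧
    ∀ (j : ℕ) (hj : j + 1 < n), y ⟨j + 1, hj⟩ - y ⟨j, Nat.lt_of_succ_lt hj⟩ ≤ d with hC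
  set S : Set (Fin n → ℝ) := {x | StrictMono x ∧ C x} with hSdef
  -- Description of S as a simplex minus bad gap sets
  have hSeq : S = sx n s \ ⋃ j ∈ Finset.range (n - 1), gapB n d j := by
    ext x
    simp only [hSdef, hC, Set.mem_setOf_eq, Set.mem_diff, sx]
    constructor
    · rintro ⟨hsm, hbx, hgap⟩
      refine ⟨⟨hsm, hbx⟩, fun hmem => ?_⟩
      obtain ⟨j, _, hj2⟩ := Set.mem_iUnion₂.1 hmem
      obtain ⟨hjn, hlt⟩ := hj2
      exact absurd (hgap j hjn) (not_le.2 hlt)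
    · rintro ⟨⟨hsm, hbx⟩, hnot⟩
      refine ⟨hsm, hbx, fun j hj => ?_⟩
      by_contra hcon
      exact hnot (Set.mem_iUnion₂.2 ⟨j, Finset.mem_range.2 (by omega), ⟨hj, not_le.1 hcon⟩⟩)
  have hSm : MeasurableSet S := by
    rw [hSeq]
    exact (measurableSet_sx s).diff
      (MeasurableSet.biUnion (Finset.range (n - 1) : Finset ℕ).countable_toSet
        fun j _ => measurableSet_gapB d j)
  -- the event intersected with the box
  have hE : {ω : Fin n → ℝ | ∀ i : Fin (n + 1), 0 < (i : ℕ) → (i : ℕ) < n →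
      slack n s ω i ≤ d} ∩ box = {x : Fin n → ℝ | C (orderStat x)} := by
    ext x
    simp only [Set.mem_inter_iff, Set.mem_setOf_eq, hbox, Set.mem_pi, Set.mem_univ,
      forall_true_left, hC]
    constructor
    · rintro ⟨hsl, hbx⟩
      refine ⟨(forall_orderStat_iff x _).2 hbx, fun j hj => ?_⟩
      have h1 := hsl ⟨j + 1, by omega⟩ (by simp) (by simpa using hj)
      rw [hslack_eq x ⟨j + 1, by omega⟩ (by simp) (by simpa using hj)] at h1
      have e1 : (⟨((⟨j + 1, by omega⟩ : Fin (n + 1)) : ℕ), by simpa using hj⟩ : Fin n)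
          = ⟨j + 1, hj⟩ := by
        apply Fin.ext; simp
      have e2 : (⟨((⟨j + 1, by omega⟩ : Fin (n + 1)) : ℕ) - 1, by simp; omega⟩ : Fin n)
          = ⟨j, Nat.lt_of_succ_lt hj⟩ := by
        apply Fin.ext; simp
      rwa [e1, e2] at h1
    · rintro ⟨hbx, hgap⟩
      refine ⟨fun i h1 h2 => ?_, (forall_orderStat_iff x _).1 hbx⟩
      rw [hslack_eq x i h1 h2]
      have hj : ((i : ℕ) - 1) + 1 < n := by omega
      have h3 := hgap ((i : ℕ) - 1) hj
      have e1 : (⟨(i : ℕ) - 1 + 1, hj⟩ : Fin n) = ⟨(i : ℕ), h2⟩ := by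
        apply Fin.ext; simp; omega
      rwa [e1] at h3
  -- finiteness
  have hsxvol : volume (sx n s) = ENNReal.ofReal (s ^ n / n !) := volume_sx hn hs.le
  have hSfin : volume S ≠ ⊤ := by
    have hle : volume S ≤ volume (sx n s) := hSeq ▸ measure_mono Set.diff_subset
    rw [hsxvol] at hle
    exact ne_top_of_le_ne_top ENNReal.ofReal_ne_top hle
  -- inclusion-exclusion computation
  have hterm : ∀ I ∈ (Finset.range (n - 1)).powerset,
      (volume (sx n s ∩ ⋂ j ∈ I, gapB n d j)).toReal
        = (max (s - I.card * d) 0) ^ n / n ! := by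
    intro I hI
    rw [volume_sx_inter_gap hn hd I (Finset.mem_powerset.1 hI)]
    by_cases h : (I.card : ℝ) * d ≤ s
    · have h0 : (0 : ℝ) ≤ s - I.card * d := by linarith
      rw [volume_sx hn (by linarith),
        ENNReal.toReal_ofReal (div_nonneg (pow_nonneg h0 n) (Nat.cast_nonneg _)),
        max_eq_left h0]
    · rw [sx_empty hn (by linarith), measure_empty, ENNReal.toReal_zero,
        max_eq_right (by linarith), zero_pow hn.ne', zero_div]
  have hIE : (volume S).toReal = ∑ I ∈ (Finset.range (n - 1)).powerset,
      (-1 : ℝ) ^ I.card * ((max (s - I.card * d) 0) ^ n / n !) := by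
    rw [hSeq, ie_aux volume (gapB n d) (measurableSet_gapB d) (Finset.range (n - 1))
      (sx n s) (measurableSet_sx s) (hsxvol ▸ ENNReal.ofReal_ne_top)]
    exact Finset.sum_congr rfl fun I hI => by rw [hterm I hI]
  have hgroup : (volume S).toReal = ∑ k ∈ Finset.range n,
      ((n - 1).choose k : ℝ) * ((-1 : ℝ) ^ k * ((max (s - k * d) 0) ^ n / n !)) := by
    rw [hIE, Finset.sum_powerset_apply_card
      (fun k => (-1 : ℝ) ^ k * ((max (s - k * d) 0) ^ n / n !)), Finset.card_range]
    rw [show n - 1 + 1 = n by omega]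
    exact Finset.sum_congr rfl fun k _ => by rw [nsmul_eq_mul]
  -- assemble the measure
  have hmain : iidUnif n s {ω : Fin n → ℝ | ∀ i : Fin (n + 1), 0 < (i : ℕ) → (i : ℕ) < n →
      slack n s ω i ≤ d} = ENNReal.ofReal (s⁻¹ ^ n * ((n ! : ℝ) * (volume S).toReal)) := by
    rw [iidUnif_eq n s, Measure.smul_apply,
      Measure.restrict_apply' (MeasurableSet.univ_pi fun _ => measurableSet_Icc),
      smul_eq_mul]
    rw [show {ω : Fin n → ℝ | ∀ i : Fin (n + 1), 0 < (i : ℕ) → (i : ℕ) < n →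
      slack n s ω i ≤ d} ∩ (Set.pi Set.univ fun _ : Fin n => Set.Icc 0 s) =
        {x : Fin n → ℝ | C (orderStat x)} from hE]
    rw [volume_orderStat_event C hSm]
    rw [ENNReal.ofReal_mul (by positivity : (0:ℝ) ≤ s⁻¹ ^ n),
      ENNReal.ofReal_mul (Nat.cast_nonneg _), ENNReal.ofReal_pow (by positivity),
      ENNReal.ofReal_natCast, ENNReal.ofReal_toReal hSfin]
  rw [hmain]
  congr 1
  rw [hgroup, Finset.mul_sum, Finset.mul_sum]
  -- pointwise simplification
  have hfac : (n ! : ℝ) ≠ 0 := Nat.cast_ne_zero.2 (Nat.factorial_ne_zero n)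
  have hptwise : ∀ k : ℕ, s⁻¹ ^ n * ((n ! : ℝ) *
      (((n - 1).choose k : ℝ) * ((-1 : ℝ) ^ k * ((max (s - k * d) 0) ^ n / n !))))
      = (-1 : ℝ) ^ k * ((n - 1).choose k : ℝ) * (max (1 - k * d / s) 0) ^ n := by
    intro k
    have h1 : max (1 - (k : ℝ) * d / s) 0 = max (s - k * d) 0 / s := by
      rw [← max_div_div_right hs.le]
      congr 1
      · field_simp
      · simp
    rw [h1, div_pow]
    field_simp
    rw [one_div, inv_pow, mul_comm _ (s ^ n), ← mul_assoc, ← mul_assoc,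
      mul_inv_cancel₀ (pow_ne_zero n hs.ne'), one_mul]
  rw [Finset.sum_congr rfl fun k _ => hptwise k]
  -- now match the two index ranges
  set N := max n (⌊s / d⌋₊ + 1) with hN
  have hL : ∑ k ∈ Finset.range n,
      (-1 : ℝ) ^ k * ((n - 1).choose k : ℝ) * (max (1 - k * d / s) 0) ^ n
      = ∑ k ∈ Finset.range N,
      (-1 : ℝ) ^ k * ((n - 1).choose k : ℝ) * (max (1 - k * d / s) 0) ^ n := by
    refine Finset.sum_subset (Finset.range_subset_range.2 (le_max_left _ _)) ?_
    intro k _ hk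
    have : (n - 1).choose k = 0 :=
      Nat.choose_eq_zero_of_lt (by simp only [Finset.mem_range, not_lt] at hk; omega)
    simp [this]
  have hR : ∑ i ∈ Finset.range (⌊s / d⌋₊ + 1),
      (-1 : ℝ) ^ i * ((n - 1).choose i : ℝ) * (1 - i * d / s) ^ n
      = ∑ k ∈ Finset.range N,
      (-1 : ℝ) ^ k * ((n - 1).choose k : ℝ) * (max (1 - k * d / s) 0) ^ n := by
    have hcong : ∀ i ∈ Finset.range (⌊s / d⌋₊ + 1),
        (-1 : ℝ) ^ i * ((n - 1).choose i : ℝ) * (1 - i * d / s) ^ n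
          = (-1 : ℝ) ^ i * ((n - 1).choose i : ℝ) * (max (1 - i * d / s) 0) ^ n := by
      intro i hi
      have h1 : (i : ℝ) ≤ ⌊s / d⌋₊ := Nat.cast_le.2 (by
        have := Finset.mem_range.1 hi; omega)
      have h2 : (⌊s / d⌋₊ : ℝ) ≤ s / d := Nat.floor_le (by positivity)
      have h3 : (i : ℝ) * d ≤ s := by
        rw [← le_div_iff₀ hd]
        linarith
      have h4 : (i : ℝ) * d / s ≤ 1 := by
        rw [div_le_one hs]
        exact h3
      rw [max_eq_left (by linarith)]
    rw [Finset.sum_congr rfl hcong]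
    refine Finset.sum_subset (Finset.range_subset_range.2 (le_max_right _ _)) ?_
    intro k _ hk
    have hk' : ⌊s / d⌋₊ < k := by
      simp only [Finset.mem_range, not_lt] at hk; omega
    have h1 : s / d < k := (Nat.floor_lt (by positivity)).1 hk'
    have h2 : s < k * d := by
      rw [div_lt_iff₀ hd] at h1
      linarith
    have h3 : (1 : ℝ) < k * d / s := by
      rw [lt_div_iff₀ hs]
      linarith
    rw [max_eq_right (by linarith), zero_pow hn.ne']
    ring
  rw [hL, hR]
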